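/- Let a, s be rational numbers with s ≠ 0 and with each of the following nonzero: s⁴ − 4a, s⁴ + 12a, 5s⁴ − 4a, 3s⁴ + 4a, s⁸ + 56s⁴a + 16a², s⁸ − 32s⁴a − 16a², s¹² − 460s⁸a − 208a²s⁴ − 64a³, and D := s¹⁶ + 1136s¹²a − 928s⁸a² + 1792a³s⁴ + 256a⁴. Define x = −(1/4)·(s⁴ − 4a)²(s¹² − 460s⁸a − 208a²s⁴ − 64a³)² / (s³(s⁴ + 12a)(s⁸ − 32s⁴a − 16a²)·D), y = −4a·s(s⁴ + 12a)(5s⁴ − 4a)²(3s⁴ + 4a)²(s⁸ + 56s⁴a + 16a²)² / (D·(s⁸ − 32s⁴a − 16a²)(s⁴ − 4a)(s¹² − 460s⁸a − 208a²s⁴ − 64a³)), and z = −(1/4)·(s⁸ − 32s⁴a − 16a²)·D / (s³(5s⁴ − 4a)(3s⁴ + 4a)(s⁸ + 56s⁴a + 16a²)(s⁴ + 12a)). Then xyz(x + y + z) = a. -/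

import Mathlib

theorem stmt_11 (a s : ℚ) (hs : s ≠ 0)
    (h1 : s ^ 4 - 4 * a ≠ 0) (h2 : s ^ 4 + 12 * a ≠ 0) (h3 : 5 * s ^ 4 - 4 * a ≠ 0)
    (h4 : 3 * s ^ 4 + 4 * a ≠ 0) (h5 : s ^ 8 + 56 * s ^ 4 * a + 16 * a ^ 2 ≠ 0)
    (h6 : s ^ 8 - 32 * s ^ 4 * a - 16 * a ^ 2 ≠ 0)
    (h7 : s ^ 12 - 460 * s ^ 8 * a - 208 * a ^ 2 * s ^ 4 - 64 * a ^ 3 ≠ 0)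
    (D : ℚ)
    (hD : D = s ^ 16 + 1136 * s ^ 12 * a - 928 * s ^ 8 * a ^ 2 + 1792 * a ^ 3 * s ^ 4 +
      256 * a ^ 4)
    (h8 : D ≠ 0)
    (x y z : ℚ)
    (hx : x = -(1 / 4) * (s ^ 4 - 4 * a) ^ 2 *
      (s ^ 12 - 460 * s ^ 8 * a - 208 * a ^ 2 * s ^ 4 - 64 * a ^ 3) ^ 2 /
      (s ^ 3 * (s ^ 4 + 12 * a) * (s ^ 8 - 32 * s ^ 4 * a - 16 * a ^ 2) * D))
    (hy : y = -4 * a * s * (s ^ 4 + 12 * a) * (5 * s ^ 4 - 4 * a) ^ 2 * (3 * s ^ 4 + 4 * a) ^ 2 *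
      (s ^ 8 + 56 * s ^ 4 * a + 16 * a ^ 2) ^ 2 /
      (D * (s ^ 8 - 32 * s ^ 4 * a - 16 * a ^ 2) * (s ^ 4 - 4 * a) *
        (s ^ 12 - 460 * s ^ 8 * a - 208 * a ^ 2 * s ^ 4 - 64 * a ^ 3)))
    (hz : z = -(1 / 4) * (s ^ 8 - 32 * s ^ 4 * a - 16 * a ^ 2) * D /
      (s ^ 3 * (5 * s ^ 4 - 4 * a) * (3 * s ^ 4 + 4 * a) *
        (s ^ 8 + 56 * s ^ 4 * a + 16 * a ^ 2) * (s ^ 4 + 12 * a))) :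
    x * y * z * (x + y + z) = a := by
  subst hx hy hz
  rw [div_add_div _ _ (by apply_rules [mul_ne_zero, pow_ne_zero]) (by apply_rules [mul_ne_zero, pow_ne_zero]),
    div_add_div _ _ (by apply_rules [mul_ne_zero, pow_ne_zero]) (by apply_rules [mul_ne_zero, pow_ne_zero]),
    div_mul_div_comm, div_mul_div_comm, div_mul_div_comm,
    div_eq_iff (by apply_rules (maxDepth := 200) [mul_ne_zero, pow_ne_zero])]
  subst hD
  ring
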